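/- Let p ∈ [1, ∞), k ≥ 1, and let A ∈ ℝ^{n×t} be a matrix with t ≥ k columns. Then there exists a set L of k column indices of A such that Σ_{i=1}^{t} min_{x ∈ ℝ^k} |A_L x − A_i|_p^p ≤ (k+1)^p · min_{rank(B) ≤ k} |A − B|_p^p, where the inner minimum on the right is over all matrices B ∈ ℝ^{n×t} of rank at most k. -/

import Mathlib

open Matrix Finset

/-- The entrywise `ℓ_p` norm of a vector in `ℝ^n`, for real `p`. -/
noncomputable def vecLpNorm {n : ℕ} (p : ℝ) (v : Fin n → ℝ) : ℝ :=
  (∑ j, |v j| ^ p) ^ (1 / p)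

/-- The entrywise `ℓ_p` norm of a matrix `M ∈ ℝ^{n×t}`, for real `p`. -/
noncomputable def matLpNorm {n t : ℕ} (p : ℝ) (M : Matrix (Fin n) (Fin t) ℝ) : ℝ :=
  (∑ i, ∑ j, |M i j| ^ p) ^ (1 / p)

lemma vecLpNorm_nonneg {n : ℕ} (p : ℝ) (v : Fin n → ℝ) : 0 ≤ vecLpNorm p v :=
  Real.rpow_nonneg (Finset.sum_nonneg fun j _ => Real.rpow_nonneg (abs_nonneg _) p) _

lemma vecLpNorm_zero {n : ℕ} {p : ℝ} (hp : 1 ≤ p) : vecLpNorm p (0 : Fin n → ℝ) = 0 := by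
  have hp0 : p ≠ 0 := by positivity
  simp [vecLpNorm, Real.zero_rpow hp0, Real.zero_rpow (inv_ne_zero hp0)]

lemma vecLpNorm_neg {n : ℕ} (p : ℝ) (v : Fin n → ℝ) : vecLpNorm p (-v) = vecLpNorm p v := by
  simp [vecLpNorm]

lemma vecLpNorm_add_le {n : ℕ} {p : ℝ} (hp : 1 ≤ p) (v w : Fin n → ℝ) :
    vecLpNorm p (v + w) ≤ vecLpNorm p v + vecLpNorm p w := by
  simpa [vecLpNorm] using Real.Lp_add_le Finset.univ v w hp

lemma vecLpNorm_smul {n : ℕ} {p : ℝ} (hp : 1 ≤ p) (a : ℝ) (v : Fin n → ℝ) :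
    vecLpNorm p (a • v) = |a| * vecLpNorm p v := by
  have hp0 : p ≠ 0 := by positivity
  have h1 : ∀ j, |a * v j| ^ p = |a| ^ p * |v j| ^ p := by
    intro j
    rw [abs_mul, Real.mul_rpow (abs_nonneg _) (abs_nonneg _)]
  have hsum : 0 ≤ ∑ j, |v j| ^ p :=
    Finset.sum_nonneg fun j _ => Real.rpow_nonneg (abs_nonneg _) p
  simp only [vecLpNorm, Pi.smul_apply, smul_eq_mul, h1, ← Finset.mul_sum]
  rw [Real.mul_rpow (Real.rpow_nonneg (abs_nonneg _) _) hsum,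
    ← Real.rpow_mul (abs_nonneg a), mul_one_div_cancel hp0, Real.rpow_one]

lemma vecLpNorm_sum_le {n : ℕ} {p : ℝ} (hp : 1 ≤ p) {ι : Type*} (s : Finset ι)
    (f : ι → Fin n → ℝ) : vecLpNorm p (∑ i ∈ s, f i) ≤ ∑ i ∈ s, vecLpNorm p (f i) := by
  classical
  induction s using Finset.induction_on with
  | empty => simp [vecLpNorm_zero hp]
  | insert a s hx ih =>
      rw [Finset.sum_insert hx, Finset.sum_insert hx]
      exact le_trans (vecLpNorm_add_le hp _ _) (by gcongr)

lemma exists_good_subset {t r k : ℕ} (hr : r ≤ k) (htk : k ≤ t) (ht0 : 0 < t)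
    (u : Fin t → Fin r → ℝ) (hspan : ⊤ ≤ Submodule.span ℝ (Set.range u)) :
    ∃ L : Fin k → Fin t, Function.Injective L ∧ ∀ i, ∃ x : Fin k → ℝ,
      (∀ j, |x j| ≤ 1) ∧ u i = ∑ j, x j • u (L j) := by
  classical
  haveI : NeZero t := ⟨ht0.ne'⟩
  let M : (Fin r → Fin t) → Matrix (Fin r) (Fin r) ℝ := fun S => Matrix.of fun a b => u (S b) a
  obtain ⟨S, -, hS⟩ := Finset.exists_max_image Finset.univ (fun S => |(M S).det|)
    Finset.univ_nonempty
  -- there is a subset with nonzero determinant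
  obtain ⟨b, hbsub, hbspan, hbli⟩ := exists_linearIndependent ℝ (Set.range u)
  have hbtop : Submodule.span ℝ b = ⊤ := by
    rw [hbspan]; exact top_unique hspan
  haveI : Fintype b := ((Set.finite_range u).subset hbsub).fintype
  let B : Module.Basis b ℝ (Fin r → ℝ) := Module.Basis.mk hbli (by rw [Subtype.range_coe]; exact hbtop.ge)
  have hcard : Fintype.card b = r := by
    have h1 := Module.finrank_eq_card_basis B
    have h2 : Module.finrank ℝ (Fin r → ℝ) = r := by simp
    omega
  let e : Fin r ≃ b := (Fintype.equivFinOfCardEq hcard).symm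
  have hmem : ∀ a : Fin r, ((e a : Fin r → ℝ)) ∈ Set.range u := fun a => hbsub (e a).2
  choose S₀ hS₀ using fun a => hmem a
  have hdet0 : (M S₀).det ≠ 0 := by
    have hli : LinearIndependent ℝ (fun a : Fin r => (M S₀)ᵀ a) := by
      have : (fun a : Fin r => (M S₀)ᵀ a) = fun a => ((e a : Fin r → ℝ)) := by
        funext a; ext x; simp [M, Matrix.transpose, hS₀ a]
      rw [this]
      exact hbli.comp e (e.injective)
    exact (Matrix.isUnit_iff_isUnit_det _).1
      (Matrix.linearIndependent_cols_iff_isUnit.1 hli) |>.ne_zero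
  have hmaxpos : 0 < |(M S).det| :=
    lt_of_lt_of_le (abs_pos.2 hdet0) (hS S₀ (Finset.mem_univ _))
  have hSdet : (M S).det ≠ 0 := fun h => by simp [h] at hmaxpos
  have hSinj : Function.Injective S := by
    intro j₁ j₂ hj
    by_contra hne
    exact hSdet (Matrix.det_zero_of_column_eq hne (fun x => by simp [M, hj]))
  -- Cramer coefficients
  set y : Fin t → Fin r → ℝ := fun i => ((M S).det)⁻¹ • Matrix.cramer (M S) (u i) with hy
  have hyv : ∀ i, M S *ᵥ y i = u i := by
    intro i
    rw [hy]
    rw [Matrix.mulVec_smul, Matrix.mulVec_cramer, smul_smul, inv_mul_cancel₀ hSdet, one_smul]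
  have hybound : ∀ i a, |y i a| ≤ 1 := by
    intro i a
    have hup : (M S).updateCol a (u i) = M (Function.update S a i) := by
      ext x yy
      by_cases h : yy = a <;> simp [Matrix.updateCol_apply, h, M, Function.update_apply]
    have := hS (Function.update S a i) (Finset.mem_univ _)
    rw [hy]
    simp only [Pi.smul_apply, smul_eq_mul, Matrix.cramer_apply, abs_mul, abs_inv]
    rw [hup] at *
    calc |(M S).det|⁻¹ * |(M (Function.update S a i)).det| ≤ |(M S).det|⁻¹ * |(M S).det| := by
          gcongr
      _ = 1 := inv_mul_cancel₀ hmaxpos.ne'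
  -- extend S to an injective map Fin k → Fin t
  obtain ⟨T, hsub, hcardT⟩ := Finset.exists_superset_card_eq
    (s := Finset.univ.image S) (n := k)
    (by rw [Finset.card_image_of_injective _ hSinj]; simpa using hr)
    (by simpa using htk)
  let eT := T.equivFin
  let L : Fin k → Fin t := fun j => (eT.symm (Fin.cast hcardT.symm j) : Fin t)
  have hLinj : Function.Injective L := by
    intro j₁ j₂ hj
    have := eT.symm.injective (Subtype.ext hj)
    simpa [Fin.ext_iff] using this
  let g : Fin r → Fin k := fun a =>
    Fin.cast hcardT (eT ⟨S a, hsub (Finset.mem_image_of_mem S (Finset.mem_univ a))⟩)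
  have hLg : ∀ a, L (g a) = S a := by
    intro a; simp [L, g]
  have hginj : Function.Injective g := by
    intro a₁ a₂ ha
    apply hSinj
    have : L (g a₁) = L (g a₂) := by rw [ha]
    rwa [hLg, hLg] at this
  refine ⟨L, hLinj, fun i => ?_⟩
  set x : Fin k → ℝ := fun j => if h : ∃ a, g a = j then y i h.choose else 0 with hx
  have hxg : ∀ a, x (g a) = y i a := by
    intro a
    have h : ∃ a', g a' = g a := ⟨a, rfl⟩
    rw [hx]
    simp only [dif_pos h]
    rw [hginj h.choose_spec]
  refine ⟨x, ?_, ?_⟩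
  · intro j
    rw [hx]
    by_cases h : ∃ a, g a = j
    · simp only [dif_pos h]; exact hybound i _
    · simp [dif_neg h]
  · have hsum1 : ∑ j, x j • u (L j) = ∑ a, y i a • u (S a) := by
      have h0 : ∑ j, x j • u (L j) = ∑ j ∈ Finset.univ.map ⟨g, hginj⟩, x j • u (L j) := by
        refine (Finset.sum_subset (Finset.subset_univ _) ?_).symm
        intro j _ hj
        have : ¬ ∃ a, g a = j := by
          intro ⟨a, ha⟩
          exact hj (Finset.mem_map.2 ⟨a, Finset.mem_univ a, ha⟩)
        simp [hx, dif_neg this]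
      rw [h0, Finset.sum_map]
      exact Finset.sum_congr rfl fun a _ => by
        simp only [Function.Embedding.coeFn_mk, hxg a, hLg a]
    rw [hsum1]
    calc u i = M S *ᵥ y i := (hyv i).symm
      _ = ∑ a, y i a • u (S a) := by
          funext xx
          simp [Matrix.mulVec, dotProduct, M, Finset.sum_apply, mul_comm]

/-- For `p ∈ [1, ∞)`, `k ≥ 1` and `A ∈ ℝ^{n×t}` with `t ≥ k` columns, there is a
set `L` of `k` column indices such that
`∑_i min_x |A_L x - A_i|_p^p ≤ (k+1)^p · min_{rank B ≤ k} |A - B|_p^p`. -/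
theorem exists_column_subset_regression_bound
    {n t k : ℕ} (p : ℝ) (hp : 1 ≤ p) (hk : 1 ≤ k) (ht : k ≤ t)
    (A : Matrix (Fin n) (Fin t) ℝ) :
    ∃ L : Fin k → Fin t, Function.Injective L ∧
      (∑ i : Fin t, sInf {c : ℝ | ∃ x : Fin k → ℝ,
            c = (vecLpNorm p (fun r => (A.submatrix id L *ᵥ x) r - A r i)) ^ p})
        ≤ ((k : ℝ) + 1) ^ p *
          sInf {c : ℝ | ∃ B : Matrix (Fin n) (Fin t) ℝ, B.rank ≤ k ∧
            c = (matLpNorm p (A - B)) ^ p} := by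
  classical
  have hp0 : p ≠ 0 := by positivity
  have hppos : 0 < p := lt_of_lt_of_le one_pos hp
  have ht0 : 0 < t := lt_of_lt_of_le hk ht
  set f : (Fin k → Fin t) → ℝ := fun L =>
    ∑ i : Fin t, sInf {c : ℝ | ∃ x : Fin k → ℝ,
      c = (vecLpNorm p (fun r => (A.submatrix id L *ᵥ x) r - A r i)) ^ p} with hf
  have hsne : (Finset.univ.filter
      (fun L : Fin k → Fin t => Function.Injective L)).Nonempty := by
    refine ⟨Fin.castLE ht, ?_⟩
    simp only [Finset.mem_filter, Finset.mem_univ, true_and]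
    exact (Fin.strictMono_castLE ht).injective
  obtain ⟨L₀, hL₀mem, hL₀min⟩ := Finset.exists_min_image _ f hsne
  have hL₀inj : Function.Injective L₀ := (Finset.mem_filter.1 hL₀mem).2
  refine ⟨L₀, hL₀inj, ?_⟩
  have key : ∀ B : Matrix (Fin n) (Fin t) ℝ, B.rank ≤ k →
      f L₀ ≤ ((k:ℝ)+1) ^ p * (matLpNorm p (A - B)) ^ p := by
    intro B hB
    set Δ := A - B with hΔ
    set ecol : Fin t → ℝ := fun i => vecLpNorm p (fun r => Δ r i) with he
    have hecol : ∀ i, 0 ≤ ecol i := fun i => vecLpNorm_nonneg p _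
    have main : ∀ δ : ℝ, 0 < δ → f L₀ ≤ ∑ i, (((k:ℝ)+1) * (ecol i + δ)) ^ p := by
      intro δ hδ
      set w : Fin t → ℝ := fun i => ecol i + δ with hw
      have hwpos : ∀ i, 0 < w i := fun i => add_pos_of_nonneg_of_pos (hecol i) hδ
      have hew : ∀ i, ecol i ≤ w i := fun i => le_add_of_nonneg_right hδ.le
      set V : Fin t → (Fin n → ℝ) := fun i => (w i)⁻¹ • (fun r => B r i) with hV
      set W := Submodule.span ℝ (Set.range V) with hWdef
      have hVmem : ∀ i, V i ∈ W := fun i => Submodule.subset_span ⟨i, rfl⟩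
      have hWle : W ≤ Submodule.span ℝ (Set.range Bᵀ) := by
        rw [hWdef]
        apply Submodule.span_le.2
        rintro _ ⟨i, rfl⟩
        exact Submodule.smul_mem _ _ (Submodule.subset_span ⟨i, rfl⟩)
      have hrank : Module.finrank ℝ W ≤ k := by
        calc Module.finrank ℝ W ≤ Module.finrank ℝ (Submodule.span ℝ (Set.range Bᵀ)) :=
              Submodule.finrank_mono hWle
          _ = B.rank := (Matrix.rank_eq_finrank_span_cols B).symm
          _ ≤ k := hB
      set r := Module.finrank ℝ W with hrdef
      let bW : Module.Basis (Fin r) ℝ W := Module.finBasis ℝ W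
      set v' : Fin t → W := fun i => ⟨V i, hVmem i⟩ with hv'
      set u : Fin t → (Fin r → ℝ) := fun i => bW.equivFun (v' i) with hu
      have h1 : Submodule.span ℝ (Set.range v') = ⊤ := by
        apply Submodule.map_injective_of_injective W.injective_subtype
        rw [Submodule.map_span, Submodule.map_subtype_top, ← Set.range_comp]
        exact hWdef.symm
      have hspanu : ⊤ ≤ Submodule.span ℝ (Set.range u) := by
        have h2 : Set.range u = ⇑bW.equivFun '' Set.range v' := by
          rw [← Set.range_comp]; rfl
        rw [h2, ← LinearEquiv.coe_coe, ← Submodule.map_span, h1, Submodule.map_top]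
        exact le_of_eq (LinearMap.range_eq_top.2 bW.equivFun.surjective).symm
      obtain ⟨L, hLinj, hL⟩ := exists_good_subset hrank ht ht0 u hspanu
      have hVi : ∀ i, ∃ c : Fin k → ℝ, (∀ j, |c j| ≤ 1) ∧ V i = ∑ j, c j • V (L j) := by
        intro i
        obtain ⟨c, hc1, hc2⟩ := hL i
        refine ⟨c, hc1, ?_⟩
        have hv : v' i = ∑ j, c j • v' (L j) := by
          apply bW.equivFun.injective
          rw [map_sum]
          simpa [_root_.map_smul, hu] using hc2
        calc V i = (v' i : Fin n → ℝ) := rfl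
          _ = ((∑ j, c j • v' (L j) : W) : Fin n → ℝ) := by rw [hv]
          _ = ∑ j, c j • V (L j) := by
              push_cast
              rfl
      have hBcol : ∀ i, ∃ x : Fin k → ℝ, (∀ j, |x j| * w (L j) ≤ w i) ∧
          ∀ rr, B rr i = ∑ j, x j * B rr (L j) := by
        intro i
        obtain ⟨c, hc1, hc2⟩ := hVi i
        refine ⟨fun j => c j * (w i / w (L j)), ?_, ?_⟩
        · intro j
          rw [abs_mul, abs_of_pos (div_pos (hwpos i) (hwpos (L j))), mul_assoc,
            div_mul_cancel₀ _ (hwpos (L j)).ne']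
          exact mul_le_of_le_one_left (hwpos i).le (hc1 j)
        · intro rr
          have hc2r := congrFun hc2 rr
          simp only [hV, Pi.smul_apply, smul_eq_mul, Finset.sum_apply] at hc2r
          have hwi : (w i) ≠ 0 := (hwpos i).ne'
          calc B rr i = w i * ((w i)⁻¹ * B rr i) := by field_simp
            _ = w i * ∑ j, c j * ((w (L j))⁻¹ * B rr (L j)) := by rw [hc2r]
            _ = ∑ j, (c j * (w i / w (L j))) * B rr (L j) := by
                rw [Finset.mul_sum]
                refine Finset.sum_congr rfl fun j _ => ?_
                have hwLj : w (L j) ≠ 0 := (hwpos (L j)).ne'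
                field_simp
      have hres : ∀ i, sInf {c : ℝ | ∃ x : Fin k → ℝ,
          c = (vecLpNorm p (fun rr => (A.submatrix id L *ᵥ x) rr - A rr i)) ^ p}
          ≤ (((k:ℝ)+1) * w i) ^ p := by
        intro i
        obtain ⟨x, hx1, hx2⟩ := hBcol i
        have hbdd : BddBelow {c : ℝ | ∃ x : Fin k → ℝ,
            c = (vecLpNorm p (fun rr => (A.submatrix id L *ᵥ x) rr - A rr i)) ^ p} := by
          refine ⟨0, ?_⟩
          rintro c ⟨x', rfl⟩
          exact Real.rpow_nonneg (vecLpNorm_nonneg p _) p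
        refine le_trans (csInf_le hbdd ⟨x, rfl⟩) ?_
        apply Real.rpow_le_rpow (vecLpNorm_nonneg p _) ?_ hppos.le
        have hfun : (fun rr => (A.submatrix id L *ᵥ x) rr - A rr i)
            = (∑ j, x j • (fun rr => Δ rr (L j))) + (-(fun rr => Δ rr i)) := by
          funext rr
          simp only [Matrix.mulVec, dotProduct, Matrix.submatrix_apply, id_eq,
            Pi.add_apply, Pi.neg_apply, Finset.sum_apply, Pi.smul_apply, smul_eq_mul,
            hΔ, Matrix.sub_apply]
          have hB2 := hx2 rr
          have hsub : ∑ j, x j * (A rr (L j) - B rr (L j))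
              = (∑ j, A rr (L j) * x j) - ∑ j, x j * B rr (L j) := by
            rw [← Finset.sum_sub_distrib]
            exact Finset.sum_congr rfl fun j _ => by ring
          rw [hsub, ← hB2]
          ring
        rw [hfun]
        calc vecLpNorm p ((∑ j, x j • (fun rr => Δ rr (L j))) + (-(fun rr => Δ rr i)))
            ≤ vecLpNorm p (∑ j, x j • (fun rr => Δ rr (L j)))
              + vecLpNorm p (-(fun rr => Δ rr i)) := vecLpNorm_add_le hp _ _
          _ ≤ (∑ j, vecLpNorm p (x j • (fun rr => Δ rr (L j)))) + ecol i := by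
              rw [vecLpNorm_neg]
              gcongr
              exact vecLpNorm_sum_le hp _ _
          _ = (∑ j, |x j| * ecol (L j)) + ecol i := by
              simp [vecLpNorm_smul hp]
              rfl
          _ ≤ (∑ _j : Fin k, w i) + w i := by
              refine add_le_add (Finset.sum_le_sum fun j _ => ?_) (hew i)
              exact le_trans (mul_le_mul_of_nonneg_left (hew _) (abs_nonneg _)) (hx1 j)
          _ = (((k:ℝ))+1) * w i := by
              simp [Finset.sum_const, Finset.card_univ]
              ring
      calc f L₀ ≤ f L := hL₀min L (Finset.mem_filter.2 ⟨Finset.mem_univ _, hLinj⟩)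
        _ ≤ ∑ i, (((k:ℝ)+1) * w i) ^ p := Finset.sum_le_sum fun i _ => hres i
    -- take the limit δ → 0⁺
    have hlim : Filter.Tendsto (fun δ => ∑ i, (((k:ℝ)+1) * (ecol i + δ)) ^ p)
        (nhdsWithin 0 (Set.Ioi 0)) (nhds (∑ i, (((k:ℝ)+1) * ecol i) ^ p)) := by
      refine Filter.Tendsto.mono_left ?_ nhdsWithin_le_nhds
      have hcont : ∀ i : Fin t, Filter.Tendsto (fun δ : ℝ => (((k:ℝ)+1) * (ecol i + δ)) ^ p)
          (nhds 0) (nhds ((((k:ℝ)+1) * ecol i) ^ p)) := by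
        intro i
        have : ContinuousAt (fun δ : ℝ => (((k:ℝ)+1) * (ecol i + δ)) ^ p) 0 := by
          apply ContinuousAt.rpow_const
          · exact (continuous_const.mul (continuous_const.add continuous_id)).continuousAt
          · right; positivity
        simpa using this.tendsto
      exact tendsto_finset_sum _ fun i _ => hcont i
    have hle : f L₀ ≤ ∑ i, (((k:ℝ)+1) * ecol i) ^ p :=
      ge_of_tendsto hlim (Filter.eventually_of_mem self_mem_nhdsWithin fun δ hδ => main δ hδ)
    have hre : ∑ i, (((k:ℝ)+1) * ecol i) ^ p = ((k:ℝ)+1) ^ p * matLpNorm p Δ ^ p := by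
      have h1 : ∀ i, (((k:ℝ)+1) * ecol i) ^ p = ((k:ℝ)+1) ^ p * (∑ rr, |Δ rr i| ^ p) := by
        intro i
        rw [Real.mul_rpow (by positivity) (hecol i)]
        congr 1
        rw [he]
        simp only [vecLpNorm]
        rw [← Real.rpow_mul (Finset.sum_nonneg fun rr _ => Real.rpow_nonneg (abs_nonneg _) p),
          one_div, inv_mul_cancel₀ hp0, Real.rpow_one]
      rw [Finset.sum_congr rfl fun i _ => h1 i, ← Finset.mul_sum]
      congr 1
      rw [matLpNorm]
      rw [← Real.rpow_mul (x := ∑ i, ∑ j, |Δ i j| ^ p)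
        (Finset.sum_nonneg fun rr _ => Finset.sum_nonneg fun i _ =>
          Real.rpow_nonneg (abs_nonneg _) p),
        one_div, inv_mul_cancel₀ hp0, Real.rpow_one, Finset.sum_comm]
    exact hle.trans (le_of_eq hre)
  have hC : (0:ℝ) < ((k:ℝ)+1) ^ p := Real.rpow_pos_of_pos (by positivity) p
  have hSne : {c : ℝ | ∃ B : Matrix (Fin n) (Fin t) ℝ, B.rank ≤ k ∧
      c = (matLpNorm p (A - B)) ^ p}.Nonempty :=
    ⟨_, ⟨0, by simp [Matrix.rank_zero], rfl⟩⟩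
  have hfin : f L₀ / (((k:ℝ)+1) ^ p) ≤ sInf {c : ℝ | ∃ B : Matrix (Fin n) (Fin t) ℝ,
      B.rank ≤ k ∧ c = (matLpNorm p (A - B)) ^ p} := by
    apply le_csInf hSne
    rintro c ⟨B, hB, rfl⟩
    rw [div_le_iff₀ hC, mul_comm]
    exact key B hB
  have h2 := (div_le_iff₀ hC).1 hfin
  linarith
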